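/- On a ≺-smooth fitness landscape on n bits, the JumpToBest algorithm—which from x jumps to the maximizer of f over the face {0,1}^{φ⁺(x)} x[φ⁻(x)]—reaches the global peak x* in at most height(≺) steps, where height(≺) is the length of the longest chain in the partial order. -/

import Mathlib

variable {n : ℕ}

def flipBit (x : Fin n → Bool) (i : Fin n) : Fin n → Bool :=
  Function.update x i (!(x i))

def PrecSmooth (r : Fin n → Fin n → Prop) (f : (Fin n → Bool) → ℤ)
    (xs : Fin n → Bool) : Prop :=
  ∀ (j : Fin n) (x : Fin n → Bool), (∀ i, r i j → x i = xs i) →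
    f (Function.update x j (xs j)) > f (Function.update x j (!(xs j)))

/-- `i` is correct at `x` (`i ∈ φ⊖(x)`): every `j ⪯ i` is in the in-map
`φ⁻(x)`, i.e. flipping `j` does not increase fitness. -/
def Correct (r : Fin n → Fin n → Prop) (f : (Fin n → Bool) → ℤ)
    (x : Fin n → Bool) (i : Fin n) : Prop :=
  ∀ j, (r j i ∨ j = i) → f (flipBit x j) ≤ f x

/-- One step of `JumpToBest`: jump to a maximizer of `f` over the face whose
free coordinates are the improving indices `φ⁺(x)` with background `x`. -/
noncomputable def jumpToBest (f : (Fin n → Bool) → ℤ) (x : Fin n → Bool) :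
    Fin n → Bool :=
  Classical.choose
    ((Finset.univ.filter fun z : Fin n → Bool =>
        ∀ i, ¬ f x < f (flipBit x i) → z i = x i).exists_max_image f
      ⟨x, by simp⟩)

lemma jump_spec (f : (Fin n → Bool) → ℤ) (x : Fin n → Bool) :
    (∀ i, ¬ f x < f (flipBit x i) → jumpToBest f x i = x i) ∧
    (∀ z, (∀ i, ¬ f x < f (flipBit x i) → z i = x i) → f z ≤ f (jumpToBest f x)) := by
  unfold jumpToBest
  generalize_proofs hE
  obtain ⟨hmem, hmax⟩ := Classical.choose_spec hE
  exact ⟨(Finset.mem_filter.mp hmem).2,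
    fun z hz => hmax z (Finset.mem_filter.mpr ⟨Finset.mem_univ z, hz⟩)⟩

section
variable {r : Fin n → Fin n → Prop} {f : (Fin n → Bool) → ℤ} {xs : Fin n → Bool}

lemma smooth_eq (hs : PrecSmooth r f xs) (x : Fin n → Bool) (i : Fin n)
    (hag : ∀ j, r j i → x j = xs j) (hx : x i = xs i) :
    f (flipBit x i) < f x := by
  have := hs i x hag
  rw [← hx] at this
  rwa [Function.update_eq_self] at this

lemma smooth_ne (hs : PrecSmooth r f xs) (x : Fin n → Bool) (i : Fin n)
    (hag : ∀ j, r j i → x j = xs j) (hx : x i ≠ xs i) :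
    f x < f (flipBit x i) := by
  have hxi : xs i = !(x i) := by
    cases hb : x i <;> cases hb' : xs i <;> simp_all
  have := hs i x hag
  rw [hxi] at this
  rwa [Bool.not_not, Function.update_eq_self] at this

lemma correct_agree (hr : IsStrictOrder (Fin n) r) (hs : PrecSmooth r f xs)
    (x : Fin n → Bool) : ∀ i, Correct r f x i → x i = xs i := by
  haveI := hr.toIsTrans
  haveI := hr.toIrrefl
  have wf : WellFounded r := Finite.wellFounded_of_trans_of_irrefl r
  intro i
  induction i using wf.induction with
  | _ i ih =>
    intro hc
    have hag : ∀ j, r j i → x j = xs j := by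
      intro j hj
      exact ih j hj (fun k hk => hc k (by
        rcases hk with hk | hk
        · exact Or.inl (Trans.trans hk hj)
        · subst hk; exact Or.inl hj))
    by_contra hx
    exact absurd (hc i (Or.inr rfl)) (not_le.mpr (smooth_ne hs x i hag hx))

lemma progress (hr : IsStrictOrder (Fin n) r) (hs : PrecSmooth r f xs)
    (x : Fin n → Bool) (i : Fin n) (hpred : ∀ j, r j i → Correct r f x j) :
    Correct r f (jumpToBest f x) i := by
  haveI := hr.toIsTrans
  set y := jumpToBest f x with hy
  obtain ⟨hfix, hmax⟩ := jump_spec f x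
  -- x agrees with xs on strict predecessors of i
  have hagx : ∀ j, r j i → x j = xs j := fun j hj =>
    correct_agree hr hs x j (hpred j hj)
  -- those coordinates are not improving, hence fixed by the jump
  have hyfix : ∀ j, r j i → y j = x j := by
    intro j hj
    exact hfix j (not_lt.mpr ((hpred j hj) j (Or.inr rfl)))
  have hagy : ∀ j, r j i → y j = xs j := fun j hj => (hyfix j hj).trans (hagx j hj)
  intro j hj
  rcases hj with hj | hj
  · -- j strict predecessor of i : y agrees with xs on preds of j and at j
    have hagj : ∀ k, r k j → y k = xs k := fun k hk => hagy k (Trans.trans hk hj)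
    exact le_of_lt (smooth_eq hs y j hagj (hagy j hj))
  · by_cases himp : f x < f (flipBit x j)
    · apply hmax
      intro k hk
      by_cases hki : k = j
      · subst hki; exact absurd himp hk
      · rw [flipBit, Function.update_of_ne hki]
        exact hfix k hk
    · have hxi : x j = xs j := by
        by_contra hxne
        exact himp (smooth_ne hs x j (hj ▸ hagx) hxne)
      have hyi : y j = xs j := (hfix j himp).trans hxi
      exact le_of_lt (smooth_eq hs y j (hj ▸ hagy) hyi)
end

section
variable {r : Fin n → Fin n → Prop} {f : (Fin n → Bool) → ℤ} {xs : Fin n → Bool}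

lemma iterate_correct (hr : IsStrictOrder (Fin n) r) (hs : PrecSmooth r f xs)
    (x0 : Fin n → Bool) : ∀ (t : ℕ) (i : Fin n),
    (∀ (k : ℕ) (c : Fin (k+1) → Fin n),
      (∀ a b : Fin (k+1), a < b → r (c a) (c b)) → c (Fin.last k) = i → k + 1 ≤ t) →
    Correct r f ((jumpToBest f)^[t] x0) i := by
  haveI := hr.toIsTrans
  intro t
  induction t with
  | zero =>
    intro i hchain
    have h1 := hchain 0 (fun _ => i) (by
      intro a b hab
      have ha : a.val < b.val := hab
      have hb : b.val < 1 := b.isLt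
      omega) rfl
    omega
  | succ t ih =>
    intro i hchain
    rw [Function.iterate_succ_apply']
    apply progress hr hs
    intro j hj
    apply ih
    intro k c hc hlast
    have hmono : ∀ a b : Fin (k+1+1), a < b → r ((Fin.snoc c i : Fin (k+1+1) → Fin n) a) ((Fin.snoc c i : Fin (k+1+1) → Fin n) b) := by
      intro a b hab
      rcases eq_or_ne b (Fin.last (k+1)) with hb | hb
      · subst hb
        rw [Fin.snoc_last]
        have ha : a ≠ Fin.last (k+1) := ne_of_lt hab
        obtain ⟨a', rfl⟩ := Fin.exists_castSucc_eq.mpr ha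
        rw [Fin.snoc_castSucc]
        rcases eq_or_ne a' (Fin.last k) with ha' | ha'
        · subst ha'; rw [hlast]; exact hj
        · have hlt : a' < Fin.last k := lt_of_le_of_ne (Fin.le_last a') ha'
          have h2 := hc a' (Fin.last k) hlt
          rw [hlast] at h2
          exact Trans.trans h2 hj
      · have hb' : b < Fin.last (k+1) := lt_of_le_of_ne (Fin.le_last b) hb
        obtain ⟨b', rfl⟩ := Fin.exists_castSucc_eq.mpr hb
        have ha : a ≠ Fin.last (k+1) := ne_of_lt (hab.trans hb')
        obtain ⟨a', rfl⟩ := Fin.exists_castSucc_eq.mpr ha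
        rw [Fin.snoc_castSucc, Fin.snoc_castSucc]
        exact hc a' b' (Fin.castSucc_lt_castSucc_iff.mp hab)
    have := hchain (k+1) (Fin.snoc c i) hmono (by simp)
    omega
end

/-- On a `≺`-smooth landscape, `JumpToBest` reaches the peak `xs` within
`height(≺)` steps: if `h` bounds the length of every `r`-chain then `h`
iterations suffice from any starting assignment. -/
theorem jumpToBest_reaches_peak_in_height_steps
    (f : (Fin n → Bool) → ℤ) (r : Fin n → Fin n → Prop)
    (hr : IsStrictOrder (Fin n) r) (xs : Fin n → Bool)
    (hs : PrecSmooth r f xs) (h : ℕ)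
    (hh : ∀ (k : ℕ) (c : Fin k → Fin n),
      (∀ a b : Fin k, a < b → r (c a) (c b)) → k ≤ h)
    (x0 : Fin n → Bool) :
    (jumpToBest f)^[h] x0 = xs := by
  funext i
  exact correct_agree hr hs _ i
    (iterate_correct hr hs x0 h i (fun k c hc _ => hh (k+1) c hc))
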